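/- Let p be a prime with p ≡ 3 (mod 4) and suppose there exist positive integers a, b, Δ with b ≡ 1 (mod 4) such that ab(ab−1) − pa = Δ². Then the Legendre symbols satisfy (ab/p) = ((ab−1)/p) = 1. -/

import Mathlib

set_option maxHeartbeats 1000000

/-- Let `p ≡ 3 (mod 4)` be a prime and suppose positive integers `a, b, Δ` with
`b ≡ 1 (mod 4)` satisfy `a*b*(a*b-1) - p*a = Δ^2`.
Then `(ab/p) = ((ab-1)/p) = 1`. -/
theorem stmt_14 (p : ℕ) [Fact p.Prime] (hp3 : p % 4 = 3) (a b Δ : ℤ)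
    (ha : 0 < a) (hb : 0 < b) (hΔ : 0 < Δ) (hb4 : b % 4 = 1)
    (heq : a * b * (a * b - 1) - (p : ℤ) * a = Δ ^ 2) :
    legendreSym p (a * b) = 1 ∧ legendreSym p (a * b - 1) = 1 := by
  have hp3' : ((p : ℤ)) % 4 = 3 := by omega
  have hp3le : (3 : ℤ) ≤ (p : ℤ) := by omega
  -- the cofactor
  set c : ℤ := b * (a * b - 1) - (p : ℤ) with hcdef
  have hac : a * c = Δ ^ 2 := by rw [hcdef]; linear_combination heq
  have hc : 0 < c := by
    rcases mul_pos_iff.mp (show 0 < a * c by rw [hac]; positivity) with h | h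
    · exact h.2
    · exact absurd ha (not_lt.mpr h.1.le)
  -- gcd decomposition a = g*u^2, c = g*v^2
  set g : ℤ := (Int.gcd a c : ℤ) with hgdef
  have hg0 : 0 < g := by
    rw [hgdef]
    exact_mod_cast Int.gcd_pos_of_ne_zero_left c (ne_of_gt ha)
  have hga : g ∣ a := Int.gcd_dvd_left a c
  have hgc : g ∣ c := Int.gcd_dvd_right a c
  have haA : a = g * (a / g) := (Int.mul_ediv_cancel' hga).symm
  have hcC : c = g * (c / g) := (Int.mul_ediv_cancel' hgc).symm
  have hA0 : 0 < a / g := by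
    rcases lt_trichotomy (a / g) 0 with h | h | h
    · nlinarith
    · rw [h, mul_zero] at haA; omega
    · exact h
  have hC0 : 0 < c / g := by
    rcases lt_trichotomy (c / g) 0 with h | h | h
    · nlinarith
    · rw [h, mul_zero] at hcC; omega
    · exact h
  have hAC : IsCoprime (a / g) (c / g) := by
    rw [Int.isCoprime_iff_gcd_eq_one]
    exact Int.gcd_div_gcd_div_gcd (Int.gcd_pos_of_ne_zero_left c (ne_of_gt ha))
  have hgΔ : g ∣ Δ := by
    rw [← Int.pow_dvd_pow_iff (two_ne_zero)]
    exact ⟨(a / g) * (c / g), by rw [← hac]; nth_rw 1 [haA, hcC]; ring⟩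
  have hδ : Δ = g * (Δ / g) := (Int.mul_ediv_cancel' hgΔ).symm
  have hACδ : (a / g) * (c / g) = (Δ / g) ^ 2 := by
    have h2 : g ^ 2 * ((a / g) * (c / g)) = g ^ 2 * ((Δ / g) ^ 2) := by
      have e1 : g * (a / g) * (g * (c / g)) = (g * (Δ / g)) ^ 2 := by
        rw [← haA, ← hcC, ← hδ]; exact hac
      linear_combination e1
    exact mul_left_cancel₀ (pow_ne_zero 2 (ne_of_gt hg0)) h2
  obtain ⟨u₀, hu₀⟩ := Int.sq_of_isCoprime hAC hACδ
  obtain ⟨v₀, hv₀⟩ := Int.sq_of_isCoprime hAC.symm (show (c / g) * (a / g) = (Δ / g) ^ 2 by linear_combination hACδ)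
  have hAu : a / g = u₀ ^ 2 := by
    rcases hu₀ with h | h
    · exact h
    · nlinarith [sq_nonneg u₀]
  have hCv : c / g = v₀ ^ 2 := by
    rcases hv₀ with h | h
    · exact h
    · nlinarith [sq_nonneg v₀]
  set u : ℤ := |u₀| with hudef
  set v : ℤ := |v₀| with hvdef
  have ha2 : a = g * u ^ 2 := by rw [hudef, sq_abs, ← hAu]; exact haA
  have hc2 : c = g * v ^ 2 := by rw [hvdef, sq_abs, ← hCv]; exact hcC
  have hu1 : 1 ≤ u := by
    rcases (abs_nonneg u₀).lt_or_eq with h | h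
    · omega
    · exfalso; rw [hudef] at *; nlinarith [sq_abs u₀]
  have hv1 : 1 ≤ v := by
    rcases (abs_nonneg v₀).lt_or_eq with h | h
    · omega
    · exfalso; rw [hvdef] at *; nlinarith [sq_abs v₀]
  have huv : IsCoprime u v := by
    have h1 : IsCoprime (u ^ 2) (v ^ 2) := by
      rw [hudef, hvdef, sq_abs, sq_abs, ← hAu, ← hCv]; exact hAC
    exact (h1.of_isCoprime_of_dvd_left (dvd_pow_self u two_ne_zero)).of_isCoprime_of_dvd_right
      (dvd_pow_self v two_ne_zero)
  -- the key identity
  have hE : g * (u ^ 2 * b ^ 2 - v ^ 2) = b + (p : ℤ) := by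
    have h1 : b * (a * b - 1) - (p : ℤ) = g * v ^ 2 := by rw [← hc2]
    linear_combination h1 - b ^ 2 * ha2
  have hbm : b * (a * b - 1) = g * v ^ 2 + (p : ℤ) := by
    have h1 : b * (a * b - 1) - (p : ℤ) = g * v ^ 2 := by rw [← hc2]
    linarith
  obtain ⟨t, ht⟩ : ∃ t, t = u * b := ⟨_, rfl⟩
  obtain ⟨x, hxdef⟩ : ∃ x, x = t - v := ⟨_, rfl⟩
  obtain ⟨y, hydef⟩ : ∃ y, y = t + v := ⟨_, rfl⟩
  have htb : b ≤ t := by rw [ht]; nth_rw 1 [← one_mul b]; exact mul_le_mul_of_nonneg_right hu1 hb.le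
  have ht1 : 1 ≤ t := by linarith
  have hkey : g * (x * y) = b + (p : ℤ) := by
    rw [hxdef, hydef, ht]; linear_combination hE
  have hg1 : 1 ≤ g := hg0
  have hy1 : 1 ≤ y := by omega
  have hx1 : 1 ≤ x := by
    by_contra h
    push_neg at h
    have hxy0 : x * y ≤ 0 := mul_nonpos_iff.mpr (Or.inr ⟨by omega, by omega⟩)
    have h2 : g * (x * y) ≤ 0 := mul_nonpos_iff.mpr (Or.inl ⟨hg0.le, hxy0⟩)
    omega
  have hxy_pos : 0 ≤ x * y := mul_nonneg (by omega) (by omega)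
  have hyxy : y ≤ x * y := le_mul_of_one_le_left (by omega) hx1
  have hyle : y ≤ b + (p : ℤ) := by
    have h2 : x * y ≤ g * (x * y) := le_mul_of_one_le_left hxy_pos hg1
    omega
  -- p does not divide g
  have hpg : ¬ ((p : ℤ) ∣ g) := by
    intro hdvd
    have hle : (p : ℤ) ≤ g := Int.le_of_dvd hg0 hdvd
    have h4 : (p : ℤ) * (x * y) ≤ g * (x * y) := mul_le_mul_of_nonneg_right hle hxy_pos
    have h3 : (p : ℤ) * y ≤ (p : ℤ) * (x * y) := mul_le_mul_of_nonneg_left hyxy (by omega)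
    have h2 : (p : ℤ) * (b + 1) ≤ (p : ℤ) * y := mul_le_mul_of_nonneg_left (by omega) (by omega)
    have h5 : 3 * b ≤ (p : ℤ) * b := mul_le_mul_of_nonneg_right hp3le hb.le
    linarith only [hkey, h2, h3, h4, h5, hb]
  -- p does not divide u
  have hpu : ¬ ((p : ℤ) ∣ u) := by
    intro hdvd
    have hle : (p : ℤ) ≤ u := Int.le_of_dvd (by omega) hdvd
    have h1 : (p : ℤ) * b ≤ t := by
      rw [ht]; exact mul_le_mul_of_nonneg_right hle hb.le
    have h3 : ((p : ℤ) - 1) * (b - 1) ≤ 0 := by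
      have hexp : ((p : ℤ) - 1) * (b - 1) = (p : ℤ) * b - (p:ℤ) - b + 1 := by ring
      rw [hexp]
      linarith only [h1, hyle, hv1, hydef]
    have h4 : 0 ≤ ((p : ℤ) - 1) * (b - 1) :=
      mul_nonneg (by omega) (by omega)
    have hb1 : b = 1 := by
      rcases mul_eq_zero.mp (le_antisymm h3 h4) with h | h <;> omega
    have hub : t = u := by rw [ht, hb1, mul_one]
    have huval : u = p ∧ v = 1 := by constructor <;> omega
    have hxv : x = (p : ℤ) - 1 := by omega
    have hyv : y = (p : ℤ) + 1 := by omega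
    rw [hb1, hxv, hyv] at hkey
    have hq0 : (0:ℤ) ≤ ((p:ℤ) - 1) * ((p:ℤ) + 1) := mul_nonneg (by omega) (by omega)
    have hq : ((p:ℤ)-1)*((p:ℤ)+1) ≤ g*(((p:ℤ)-1)*((p:ℤ)+1)) := le_mul_of_one_le_left hq0 hg1
    have hq2 : ((p:ℤ)-1)*((p:ℤ)+1) = (p:ℤ)*(p:ℤ) - 1 := by ring
    have hq3 : (p:ℤ)*3 ≤ (p:ℤ)*(p:ℤ) := mul_le_mul_of_nonneg_left hp3le (by omega)
    linarith only [hkey, hq, hq2, hq3, hp3le]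
  -- p does not divide v
  have hpv : ¬ ((p : ℤ) ∣ v) := by
    intro hdvd
    have hle : (p : ℤ) ≤ v := Int.le_of_dvd (by omega) hdvd
    have htv : t = b ∧ v = p := by constructor <;> omega
    have hu' : u = 1 := by
      have h0 : (u - 1) * b = 0 := by rw [ht] at htv; linear_combination htv.1
      rcases mul_eq_zero.mp h0 with h | h <;> omega
    have hgx : g * x = 1 := by
      have h0 : (g * x - 1) * y = 0 := by linear_combination hkey - (by omega : y = b + (p:ℤ))
      rcases mul_eq_zero.mp h0 with h | h
      · linarith only [h]
      · omega
    have hx_eq : x = 1 := by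
      have : x = 1 ∨ x = -1 := Int.isUnit_iff.mp (IsUnit.of_mul_eq_one (a := x) g (by rw [mul_comm]; exact hgx))
      omega
    omega
  -- p does not divide b
  have hpb : ¬ ((p : ℤ) ∣ b) := by
    intro hdvd
    have hle : (p : ℤ) ≤ b := Int.le_of_dvd hb hdvd
    have hu' : u = 1 := by
      by_contra h
      have h2 : 2 ≤ u := by omega
      have : 2 * b ≤ t := by rw [ht]; exact mul_le_mul_of_nonneg_right h2 hb.le
      omega
    have htb' : t = b := by rw [ht, hu', one_mul]
    have hgx1 : 1 ≤ g * x := by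
      have h0 := Int.lt_iff_add_one_le.mp (mul_pos hg0 (show (0:ℤ) < x by omega))
      linarith only [h0]
    have hgx : g * x = 1 := by
      by_contra hne
      have h2 : 2 ≤ g * x := by
        have h0 := Int.lt_iff_add_one_le.mp (lt_of_le_of_ne hgx1 (Ne.symm hne))
        linarith only [h0]
      have h3 : 2 * y ≤ (g * x) * y := mul_le_mul_of_nonneg_right h2 (by omega)
      have h4 : (g * x) * y = b + (p : ℤ) := by rw [mul_assoc]; exact hkey
      linarith only [h3, h4, hydef, htb', hv1, hle, hb]
    have hyy : y = b + (p : ℤ) := by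
      have h4 : (g * x) * y = b + (p : ℤ) := by rw [mul_assoc]; exact hkey
      rw [hgx, one_mul] at h4; exact h4
    have hvp : v = p := by omega
    have hx_eq : x = 1 := by
      have : x = 1 ∨ x = -1 := Int.isUnit_iff.mp (IsUnit.of_mul_eq_one (a := x) g (by rw [mul_comm]; exact hgx))
      omega
    have hb1 : b = (p : ℤ) + 1 := by omega
    rw [hb1] at hdvd
    have : (p : ℤ) ∣ 1 := (dvd_add_right (dvd_refl _)).mp hdvd
    have := Int.le_of_dvd one_pos this
    omega
  -- ℕ versions
  obtain ⟨B, hBb⟩ : ∃ B : ℕ, (B : ℤ) = b := ⟨b.toNat, Int.toNat_of_nonneg hb.le⟩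
  have hB4 : B % 4 = 1 := by omega
  have hBodd : Odd B := by rw [Nat.odd_iff]; omega
  have hpodd : Odd p := by rw [Nat.odd_iff]; omega
  have hpo2 : p / 2 % 2 = 1 := by omega
  have hGne : a.gcd c ≠ 0 := by
    have : (0:ℤ) < (a.gcd c : ℤ) := by rw [← hgdef]; exact hg0
    omega
  obtain ⟨e, g₀, hg₀odd, hGdec⟩ := Nat.exists_eq_two_pow_mul_odd hGne
  have hgdec : g = 2 ^ e * (g₀ : ℤ) := by rw [hgdef, hGdec]; push_cast; ring
  have hg₀g : (g₀:ℤ) ∣ g := ⟨2^e, by rw [hgdec]; ring⟩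
  have hgbp : g ∣ (b + (p:ℤ)) := ⟨x * y, hkey.symm⟩
  have hg₀bp : (g₀:ℤ) ∣ (b + (p:ℤ)) := hg₀g.trans hgbp
  have hpg₀ : ¬ ((p:ℤ) ∣ (g₀:ℤ)) := fun h => hpg (h.trans hg₀g)
  -- common prime divisors of b and g*v^2 would be p
  have hqp : ∀ q : ℕ, q.Prime → (q:ℤ) ∣ b → (q:ℤ) ∣ g * v^2 → False := by
    intro q hq hqb hqgv
    have hqP : (q:ℤ) ∣ (p:ℤ) := by
      have hrw : (p:ℤ) = b * (a*b-1) - g*v^2 := by linarith [hbm]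
      rw [hrw]; exact dvd_sub (hqb.mul_right _) hqgv
    have : q = p := by
      rw [Int.natCast_dvd_natCast] at hqP
      exact (Nat.prime_dvd_prime_iff_eq hq Fact.out).mp hqP
    exact hpb (this ▸ hqb)
  have hvBcop : Nat.Coprime v.natAbs B := by
    by_contra h
    obtain ⟨q, hq, h1, h2⟩ := Nat.Prime.not_coprime_iff_dvd.mp h
    refine hqp q hq ?_ ?_
    · rw [← hBb]; exact_mod_cast Int.natCast_dvd_natCast.mpr h2
    · exact dvd_mul_of_dvd_right ((Int.natCast_dvd.mpr h1).trans (dvd_pow_self v two_ne_zero)) _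
  have hg₀Bcop : Nat.Coprime g₀ B := by
    by_contra h
    obtain ⟨q, hq, h1, h2⟩ := Nat.Prime.not_coprime_iff_dvd.mp h
    refine hqp q hq ?_ ?_
    · rw [← hBb]; exact_mod_cast Int.natCast_dvd_natCast.mpr h2
    · exact dvd_mul_of_dvd_left ((Int.natCast_dvd_natCast.mpr h1).trans hg₀g) _
  have hvB : Int.gcd v (B:ℤ) = 1 := by
    have : Int.gcd v (B:ℤ) = Nat.gcd v.natAbs B := by
      rw [Int.gcd]; norm_num
    rw [this]; exact hvBcop
  have hg₀B : Int.gcd (g₀:ℤ) (B:ℤ) = 1 := by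
    rw [Int.gcd_natCast_natCast]; exact hg₀Bcop
  have hIntGcdP : ∀ z : ℤ, ¬ ((p:ℤ) ∣ z) → Int.gcd z ((p:ℕ):ℤ) = 1 := by
    intro z hz
    have h1 : Nat.Coprime p z.natAbs :=
      (Nat.Prime.coprime_iff_not_dvd Fact.out).mpr (fun h => hz (Int.natCast_dvd.mpr h))
    have : Int.gcd z ((p:ℕ):ℤ) = Nat.gcd z.natAbs p := by rw [Int.gcd]; norm_num
    rw [this]; exact h1.symm
  have hbp_gcd : Int.gcd b ((p:ℕ):ℤ) = 1 := hIntGcdP b hpb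
  have hup_gcd : Int.gcd u ((p:ℕ):ℤ) = 1 := hIntGcdP u hpu
  have hvp_gcd : Int.gcd v ((p:ℕ):ℤ) = 1 := hIntGcdP v hpv
  -- the reciprocity chain
  have hS1 : jacobiSym (g₀:ℤ) p = jacobiSym b g₀ := by
    have hrec := jacobiSym.quadratic_reciprocity hpodd hg₀odd
    have hdvd : (g₀:ℤ) ∣ (-b) - (p:ℤ) := by
      rw [show -b - (p:ℤ) = -(b + (p:ℤ)) by ring]; exact dvd_neg.mpr hg₀bp
    have hmod : jacobiSym ((p:ℕ):ℤ) g₀ = jacobiSym (-b) g₀ :=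
      jacobiSym.mod_left' (Int.modEq_iff_dvd.mpr hdvd)
    have hsplit : jacobiSym (-b) g₀ = (ZMod.χ₄ g₀ : ℤ) * jacobiSym b g₀ := by
      rw [show (-b) = (-1) * b by ring, jacobiSym.mul_left, jacobiSym.at_neg_one hg₀odd]
    have hχ : (ZMod.χ₄ g₀ : ℤ) = (-1:ℤ)^(g₀/2) := ZMod.χ₄_eq_neg_one_pow (Nat.odd_iff.mp hg₀odd)
    have hsign : ((-1:ℤ))^(p/2*(g₀/2)) = (-1:ℤ)^(g₀/2) := by
      rw [pow_mul, Odd.neg_one_pow (Nat.odd_iff.mpr hpo2)]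
    have h5 : (-1:ℤ)^(g₀/2) * jacobiSym b g₀ = (-1:ℤ)^(g₀/2) * jacobiSym (g₀:ℤ) p := by
      rw [← hχ, ← hsplit, ← hmod, hrec, hsign, hχ]
    exact (mul_left_cancel₀ (pow_ne_zero _ (by norm_num)) h5).symm
  have hS2 : jacobiSym b g₀ = jacobiSym (g₀:ℤ) B := by
    rw [← hBb]; exact jacobiSym.quadratic_reciprocity_one_mod_four hB4 hg₀odd
  have hS3 : jacobiSym b p = jacobiSym ((p:ℕ):ℤ) B := by
    rw [← hBb]; exact jacobiSym.quadratic_reciprocity_one_mod_four hB4 hpodd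
  have hS4 : jacobiSym ((p:ℕ):ℤ) B = (jacobiSym 2 B)^e * jacobiSym (g₀:ℤ) B := by
    have hdvd : (B:ℤ) ∣ (-(g * v^2)) - (p:ℤ) := by
      rw [hBb]
      exact ⟨-(a*b-1), by linear_combination hbm⟩
    have hmod : jacobiSym ((p:ℕ):ℤ) B = jacobiSym (-(g*v^2)) B :=
      jacobiSym.mod_left' (Int.modEq_iff_dvd.mpr hdvd)
    rw [hmod, show -(g*v^2) = ((-1) * g) * v^2 by ring, jacobiSym.mul_left, jacobiSym.mul_left,
      jacobiSym.at_neg_one hBodd, ZMod.χ₄_nat_one_mod_four hB4, jacobiSym.sq_one' hvB,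
      hgdec, jacobiSym.mul_left, jacobiSym.pow_left]
    ring
  have hgp_split : jacobiSym g p = (jacobiSym 2 p)^e * jacobiSym (g₀:ℤ) p := by
    rw [hgdec, jacobiSym.mul_left, jacobiSym.pow_left]
  have hJbp_sq : (jacobiSym b p)^2 = 1 := jacobiSym.sq_one hbp_gcd
  have hJg₀B_sq : (jacobiSym (g₀:ℤ) B)^2 = 1 := jacobiSym.sq_one hg₀B
  have hmain : jacobiSym g p * jacobiSym b p = (jacobiSym 2 p * jacobiSym 2 B)^e := by
    calc jacobiSym g p * jacobiSym b p
        = ((jacobiSym 2 p)^e * jacobiSym (g₀:ℤ) B) * ((jacobiSym 2 B)^e * jacobiSym (g₀:ℤ) B) := by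
          rw [hgp_split, hS1, hS2, hS3, hS4]
      _ = (jacobiSym 2 p * jacobiSym 2 B)^e * (jacobiSym (g₀:ℤ) B)^2 := by ring
      _ = (jacobiSym 2 p * jacobiSym 2 B)^e := by rw [hJg₀B_sq, mul_one]
  have hη : (jacobiSym 2 p * jacobiSym 2 B)^e = 1 := by
    by_cases h8 : (8:ℤ) ∣ (b + (p:ℤ))
    · have hBp8 : (8:ℤ) ∣ ((B:ℤ) + (p:ℤ)) := by rw [hBb]; exact h8
      have h2 : jacobiSym 2 p * jacobiSym 2 B = 1 := by
        rw [jacobiSym.at_two hpodd, jacobiSym.at_two hBodd,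
          ZMod.χ₈_nat_eq_if_mod_eight, ZMod.χ₈_nat_eq_if_mod_eight]
        have hp2' : ¬ (p % 2 = 0) := by omega
        have hB2' : ¬ (B % 2 = 0) := by omega
        rcases (by omega : p % 8 = 3 ∨ p % 8 = 7) with h | h
        · have hB8 : B % 8 = 5 := by omega
          rw [if_neg hp2', if_neg hB2', if_neg (by omega), if_neg (by omega)]; norm_num
        · have hB8 : B % 8 = 1 := by omega
          rw [if_neg hp2', if_neg hB2', if_pos (by omega), if_pos (by omega)]; norm_num
      rw [h2, one_pow]
    · have hsq8 : ∀ z : ℤ, Odd z → (8:ℤ) ∣ z^2 - 1 := by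
        intro z hz
        obtain ⟨k, hk⟩ := hz
        obtain ⟨s, hs⟩ := Int.even_mul_succ_self k
        exact ⟨s, by rw [hk]; linear_combination 4*hs⟩
      have hbodd' : Odd b := by rw [Int.odd_iff]; omega
      have hwodd : Odd (u^2 * b^2 - v^2) := by
        rcases Int.even_or_odd u with hu | hu
        · rcases Int.even_or_odd v with hv | hv
          · exfalso
            have h2u : (2:ℤ) ∣ u := hu.two_dvd
            have h2v : (2:ℤ) ∣ v := hv.two_dvd
            have := huv.isUnit_of_dvd' h2u h2v
            rw [Int.isUnit_iff] at this
            omega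
          · have he : Even (u^2 * b^2) := by
              rw [show u^2*b^2 = u*(u*b^2) by ring]; exact hu.mul_right _
            exact he.sub_odd hv.pow
        · rcases Int.even_or_odd v with hv | hv
          · have ho : Odd (u^2 * b^2) := by
              rw [show u^2*b^2 = (u*b)^2 by ring]; exact (hu.mul hbodd').pow
            have hev : Even (v^2) := by
              rw [sq]; exact hv.mul_right _
            exact ho.sub_even hev
          · exfalso
            apply h8
            have h81 := hsq8 (u*b) (hu.mul hbodd')
            have h82 := hsq8 v hv
            have h83 : (8:ℤ) ∣ u^2*b^2 - v^2 := by
              have := dvd_sub h81 h82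
              rw [show (u*b)^2 - 1 - (v^2 - 1) = u^2*b^2 - v^2 by ring] at this
              exact this
            rw [← hE]
            exact h83.mul_left g
      have hbp_eq : b + (p:ℤ) = 2^e * ((g₀:ℤ) * (u^2*b^2 - v^2)) := by
        rw [← hE, hgdec]; ring
      have hg₀w_odd : Odd ((g₀:ℤ) * (u^2*b^2 - v^2)) :=
        ((Int.odd_coe_nat g₀).mpr hg₀odd).mul hwodd
      obtain ⟨k, hk⟩ := hg₀w_odd
      have h4 : (4:ℤ) ∣ b + (p:ℤ) := by omega
      have he2 : e = 2 := by
        match e, hbp_eq with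
        | 0, hbp_eq => rw [pow_zero, one_mul, hk] at hbp_eq; omega
        | 1, hbp_eq => rw [pow_one, hk] at hbp_eq; omega
        | 2, hbp_eq => rfl
        | (n+3), hbp_eq =>
          exfalso
          exact h8 ⟨2^n * ((g₀:ℤ) * (u^2*b^2 - v^2)), by rw [hbp_eq]; ring⟩
      have h2p_gcd : Int.gcd (2:ℤ) ((p:ℕ):ℤ) = 1 := by
        have : Nat.Coprime 2 p := (Nat.Prime.coprime_iff_not_dvd Nat.prime_two).mpr (by omega)
        have h' : Int.gcd (2:ℤ) ((p:ℕ):ℤ) = Nat.gcd 2 p := by rw [Int.gcd]; norm_num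
        rw [h']; exact this
      have h2B_gcd : Int.gcd (2:ℤ) ((B:ℕ):ℤ) = 1 := by
        have : Nat.Coprime 2 B := (Nat.Prime.coprime_iff_not_dvd Nat.prime_two).mpr (by omega)
        have h' : Int.gcd (2:ℤ) ((B:ℕ):ℤ) = Nat.gcd 2 B := by rw [Int.gcd]; norm_num
        rw [h']; exact this
      rw [he2, mul_pow, jacobiSym.sq_one h2p_gcd, jacobiSym.sq_one h2B_gcd, mul_one]
  have hJ1 : jacobiSym g p * jacobiSym b p = 1 := hmain.trans hη
  constructor
  · rw [jacobiSym.legendreSym.to_jacobiSym, ha2, jacobiSym.mul_left, jacobiSym.mul_left,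
      jacobiSym.sq_one' hup_gcd, mul_one]
    exact hJ1
  · have hsplit : jacobiSym b p * jacobiSym (a*b-1) p = jacobiSym g p := by
      rw [← jacobiSym.mul_left, hbm]
      have h2 : jacobiSym (g*v^2 + (p:ℤ)) p = jacobiSym (g*v^2) p :=
        jacobiSym.mod_left' (by simpa using Int.add_mul_emod_self_left (a := g*v^2) (b := ((p:ℕ):ℤ)) (c := 1))
      rw [h2, jacobiSym.mul_left, jacobiSym.sq_one' hvp_gcd, mul_one]
    rw [jacobiSym.legendreSym.to_jacobiSym]
    calc jacobiSym (a*b-1) p = (jacobiSym b p)^2 * jacobiSym (a*b-1) p := by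
          rw [hJbp_sq, one_mul]
      _ = jacobiSym b p * (jacobiSym b p * jacobiSym (a*b-1) p) := by ring
      _ = jacobiSym b p * jacobiSym g p := by rw [hsplit]
      _ = 1 := by rw [mul_comm]; exact hJ1
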